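/- Let W ⊆ (0,1)×(0,1) be a countable union of countable intersections of finite unions of measurable rectangles (class A_{δσ}), such that W ∩ (A×B) ≠ ∅ for all measurable sets A, B ⊆ (0,1) of positive Lebesgue measure. Then there exists a probability measure m on (0,1)×(0,1) with m(W) = 1 and both marginals of m bounded by Lebesgue measure (hence equal to Lebesgue measure). -/

import Mathlib

open MeasureTheory Set
open scoped ENNReal

noncomputable section

/-- A finite union of measurable rectangles `U ×ˢ V` with
`U, V` Borel subsets of `(0,1)`. -/
def IsFinUnionRect (S : Set (ℝ × ℝ)) : Prop :=
  ∃ (n : ℕ) (R : Fin n → Set (ℝ × ℝ)),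
    (∀ k, ∃ U V : Set ℝ, MeasurableSet U ∧ MeasurableSet V ∧
      U ⊆ Ioo (0:ℝ) 1 ∧ V ⊆ Ioo (0:ℝ) 1 ∧ R k = U ×ˢ V) ∧
    S = ⋃ k, R k

/-- The class `A_{δσ}`: countable unions of countable intersections of
members of the algebra generated by measurable rectangles. -/
def MemADeltaSigma (W : Set (ℝ × ℝ)) : Prop :=
  ∃ G : ℕ → ℕ → Set (ℝ × ℝ),
    (∀ i j, IsFinUnionRect (G i j)) ∧ W = ⋃ i, ⋂ j, G i j

open Filter
open scoped Topology

namespace S4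

/-- feasibility: both marginals dominated. -/
def Feas (κ₁ κ₂ : Measure ℝ) (m : Measure (ℝ × ℝ)) : Prop :=
  m.map Prod.fst ≤ κ₁ ∧ m.map Prod.snd ≤ κ₂

lemma Feas.zero (κ₁ κ₂ : Measure ℝ) : Feas κ₁ κ₂ 0 := by
  refine ⟨?_, ?_⟩ <;> · rw [Measure.map_zero]; intro s; exact zero_le

lemma Feas.mass {κ₁ κ₂ : Measure ℝ} {m : Measure (ℝ × ℝ)} (h : Feas κ₁ κ₂ m) :
    m univ ≤ κ₁ univ := by
  have := h.1 univ
  rwa [Measure.map_apply measurable_fst MeasurableSet.univ, Set.preimage_univ] at this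

lemma Feas.fst_apply {κ₁ κ₂ : Measure ℝ} {m : Measure (ℝ × ℝ)} (h : Feas κ₁ κ₂ m)
    {A : Set ℝ} (hA : MeasurableSet A) : m (A ×ˢ univ) ≤ κ₁ A := by
  have := h.1 A
  rwa [Measure.map_apply measurable_fst hA, ← Set.prod_univ] at this

lemma Feas.snd_apply {κ₁ κ₂ : Measure ℝ} {m : Measure (ℝ × ℝ)} (h : Feas κ₁ κ₂ m)
    {B : Set ℝ} (hB : MeasurableSet B) : m (univ ×ˢ B) ≤ κ₂ B := by
  have := h.2 B
  rwa [Measure.map_apply measurable_snd hB, ← Set.univ_prod] at this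

lemma Feas.mono {κ₁ κ₂ κ₁' κ₂' : Measure ℝ} {m : Measure (ℝ × ℝ)} (h : Feas κ₁ κ₂ m)
    (h1 : κ₁ ≤ κ₁') (h2 : κ₂ ≤ κ₂') : Feas κ₁' κ₂' m :=
  ⟨h.1.trans h1, h.2.trans h2⟩

lemma Feas.restrict {κ₁ κ₂ : Measure ℝ} {m : Measure (ℝ × ℝ)} (h : Feas κ₁ κ₂ m)
    (E : Set (ℝ × ℝ)) : Feas κ₁ κ₂ (m.restrict E) :=
  ⟨(Measure.map_mono Measure.restrict_le_self measurable_fst).trans h.1,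
   (Measure.map_mono Measure.restrict_le_self measurable_snd).trans h.2⟩

lemma Feas.add {κ₁ κ₂ κ₁' κ₂' : Measure ℝ} {m m' : Measure (ℝ × ℝ)}
    (h : Feas κ₁ κ₂ m) (h' : Feas κ₁' κ₂' m') : Feas (κ₁ + κ₁') (κ₂ + κ₂') (m + m') := by
  constructor
  · rw [Measure.map_add _ _ measurable_fst]; exact add_le_add h.1 h'.1
  · rw [Measure.map_add _ _ measurable_snd]; exact add_le_add h.2 h'.2

lemma Feas.smul {κ₁ κ₂ : Measure ℝ} {m : Measure (ℝ × ℝ)} (h : Feas κ₁ κ₂ m)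
    {c : ℝ≥0∞} (hc : c ≤ 1) : Feas κ₁ κ₂ (c • m) := by
  have key : ∀ (f : ℝ × ℝ → ℝ) (hf : Measurable f) (κ : Measure ℝ), m.map f ≤ κ →
      (c • m).map f ≤ κ := by
    intro f hf κ hκ s
    rw [Measure.map_smul, Measure.smul_apply, smul_eq_mul]
    calc c * (m.map f) s ≤ 1 * (m.map f) s := mul_le_mul_left hc _
      _ = (m.map f) s := one_mul _
      _ ≤ κ s := hκ s
  exact ⟨key _ measurable_fst _ h.1, key _ measurable_snd _ h.2⟩


lemma IsFinUnionRect.measurableSet {S : Set (ℝ × ℝ)} (h : IsFinUnionRect S) :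
    MeasurableSet S := by
  obtain ⟨n, R, hR, rfl⟩ := h
  refine MeasurableSet.iUnion fun k => ?_
  obtain ⟨U, V, hU, hV, -, -, hk⟩ := hR k
  rw [hk]; exact hU.prod hV

lemma IsFinUnionRect.subset {S : Set (ℝ × ℝ)} (h : IsFinUnionRect S) :
    S ⊆ (Ioo (0:ℝ) 1) ×ˢ (Ioo (0:ℝ) 1) := by
  obtain ⟨n, R, hR, rfl⟩ := h
  refine Set.iUnion_subset fun k => ?_
  obtain ⟨U, V, -, -, hU1, hV1, hk⟩ := hR k
  rw [hk]; exact Set.prod_mono hU1 hV1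

lemma IsFinUnionRect.inter {S T : Set (ℝ × ℝ)} (hS : IsFinUnionRect S)
    (hT : IsFinUnionRect T) : IsFinUnionRect (S ∩ T) := by
  obtain ⟨n, R, hR, rfl⟩ := hS
  obtain ⟨n', R', hR', rfl⟩ := hT
  refine ⟨n * n', fun k => (fun p : Fin n × Fin n' => R p.1 ∩ R' p.2)
    (finProdFinEquiv.symm k), fun k => ?_, ?_⟩
  · obtain ⟨U, V, hU, hV, hU1, hV1, ha⟩ := hR (finProdFinEquiv.symm k).1
    obtain ⟨U', V', hU', hV', hU1', hV1', hb⟩ := hR' (finProdFinEquiv.symm k).2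
    exact ⟨U ∩ U', V ∩ V', hU.inter hU', hV.inter hV',
      (inter_subset_left).trans hU1, (inter_subset_left).trans hV1,
      by show R _ ∩ R' _ = _; rw [ha, hb, Set.prod_inter_prod]⟩
  · ext x
    simp only [Set.mem_inter_iff, Set.mem_iUnion]
    constructor
    · rintro ⟨⟨a, hxa⟩, ⟨b, hxb⟩⟩
      refine ⟨finProdFinEquiv (a, b), ?_⟩
      show x ∈ R _ ∩ R' _
      rw [Equiv.symm_apply_apply]
      exact ⟨hxa, hxb⟩
    · rintro ⟨k, hk1, hk2⟩
      exact ⟨⟨_, hk1⟩, ⟨_, hk2⟩⟩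


lemma smul_measure_le_of_le_one {α : Type*} [MeasurableSpace α] {μ ν : Measure α}
    {c : ℝ≥0∞} (hc : c ≤ 1) (h : μ ≤ ν) : c • μ ≤ ν := by
  intro s
  rw [Measure.smul_apply, smul_eq_mul]
  calc c * μ s ≤ 1 * μ s := mul_le_mul_left hc _
    _ = μ s := one_mul _
    _ ≤ ν s := h s

lemma iUnion_fin_succ {α : Type*} {n : ℕ} (f : Fin (n + 1) → Set α) :
    (⋃ k, f k) = f 0 ∪ ⋃ k : Fin n, f k.succ := by
  ext x; simp [Fin.exists_fin_succ]

lemma two_mul_div_two (θ : ℝ≥0∞) : 2 * θ / 2 = θ := by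
  rw [mul_comm, mul_div_assoc, ENNReal.div_self (by norm_num) (by norm_num), mul_one]

lemma half_le_add_half_sub (c θ : ℝ≥0∞) : c / 2 ≤ θ + (c - 2 * θ) / 2 := by
  rcases le_total c (2 * θ) with h | h
  · calc c / 2 ≤ 2 * θ / 2 := ENNReal.div_le_div_right h 2
      _ = θ := two_mul_div_two θ
      _ ≤ _ := le_add_right le_rfl
  · have : θ + (c - 2 * θ) / 2 = (2 * θ + (c - 2 * θ)) / 2 := by
      rw [ENNReal.add_div, two_mul_div_two]
    rw [this, add_tsub_cancel_of_le h]

theorem dual : ∀ (n : ℕ) (U V : Fin n → Set ℝ),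
    (∀ k, MeasurableSet (U k)) → (∀ k, MeasurableSet (V k)) →
    ∀ (κ₁ κ₂ : Measure ℝ), IsFiniteMeasure κ₁ → IsFiniteMeasure κ₂ → ∀ (c : ℝ≥0∞),
    (∀ A' B' : Set ℝ, MeasurableSet A' → MeasurableSet B' →
        (A' ×ˢ B') ∩ (⋃ k, U k ×ˢ V k) = ∅ → c ≤ κ₁ A'ᶜ + κ₂ B'ᶜ) →
    ∃ m : Measure (ℝ × ℝ), Feas κ₁ κ₂ m ∧ c / 2 ≤ m (⋃ k, U k ×ˢ V k) := by
  intro n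
  induction n with
  | zero =>
    intro U V _ _ κ₁ κ₂ _ _ c hcov
    have h0 : (⋃ k : Fin 0, U k ×ˢ V k) = ∅ := by simp
    have hc0 := hcov univ univ MeasurableSet.univ MeasurableSet.univ (by simp [h0])
    simp only [Set.compl_univ, measure_empty, add_zero] at hc0
    refine ⟨0, ⟨by intro s; simp, by intro s; simp⟩, ?_⟩
    have : c = 0 := le_antisymm hc0 (zero_le)
    simp [this]
  | succ n IH =>
    intro U V hU hV κ₁ κ₂ hκ₁ hκ₂ c hcov
    set S : Set (ℝ × ℝ) := ⋃ k, U k ×ˢ V k with hS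
    set S' : Set (ℝ × ℝ) := ⋃ k : Fin n, U k.succ ×ˢ V k.succ with hS'
    have hSdec : S = (U 0 ×ˢ V 0) ∪ S' := iUnion_fin_succ _
    have hS'S : S' ⊆ S := by rw [hSdec]; exact subset_union_right
    have h0S : U 0 ×ˢ V 0 ⊆ S := by rw [hSdec]; exact subset_union_left
    set base := (κ₁.restrict (U 0)).prod (κ₂.restrict (V 0)) with hbase
    have hbase_eval : ∀ E : Set (ℝ × ℝ), U 0 ×ˢ V 0 ⊆ E → base E = κ₁ (U 0) * κ₂ (V 0) := by
      intro E hE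
      have h1 : base (U 0 ×ˢ V 0) = κ₁ (U 0) * κ₂ (V 0) := by
        rw [hbase, Measure.prod_prod, Measure.restrict_apply_self, Measure.restrict_apply_self]
      have h2 : base univ = κ₁ (U 0) * κ₂ (V 0) := by
        rw [hbase, ← Set.univ_prod_univ, Measure.prod_prod, Measure.restrict_apply_univ,
          Measure.restrict_apply_univ]
      exact le_antisymm (h2 ▸ measure_mono (subset_univ _)) (h1 ▸ measure_mono hE)
    rcases le_total (κ₂ (V 0)) (κ₁ (U 0)) with hcase | hcase
    · -- column removal, θ := κ₂ (V 0)
      set θ := κ₂ (V 0) with hθdef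
      set m₀ := (κ₁ (U 0))⁻¹ • base with hm₀
      have hm₀eval : ∀ E : Set (ℝ × ℝ), U 0 ×ˢ V 0 ⊆ E →
          m₀ E = (κ₁ (U 0))⁻¹ * (κ₁ (U 0) * θ) := by
        intro E hE
        rw [hm₀, Measure.smul_apply, smul_eq_mul, hbase_eval E hE]
      have hfst : m₀.map Prod.fst = ((κ₁ (U 0))⁻¹ * θ) • κ₁.restrict (U 0) := by
        rw [hm₀, Measure.map_smul, hbase, Measure.map_fst_prod, Measure.restrict_apply_univ,
          smul_smul]
      have hsnd : m₀.map Prod.snd = ((κ₁ (U 0))⁻¹ * κ₁ (U 0)) • κ₂.restrict (V 0) := by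
        rw [hm₀, Measure.map_smul, hbase, Measure.map_snd_prod, Measure.restrict_apply_univ,
          smul_smul]
      have hfac1 : (κ₁ (U 0))⁻¹ * θ ≤ 1 :=
        (mul_le_mul_right hcase _).trans (ENNReal.inv_mul_le_one _)
      have hm₀fst : m₀.map Prod.fst ≤ κ₁ := by
        rw [hfst]; exact smul_measure_le_of_le_one hfac1 Measure.restrict_le_self
      have hm₀snd : m₀.map Prod.snd ≤ κ₂.restrict (V 0) := by
        rw [hsnd]; exact smul_measure_le_of_le_one (ENNReal.inv_mul_le_one _) le_rfl
      have hm₀mass : m₀ univ ≤ θ := by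
        rw [hm₀eval univ (subset_univ _), ← mul_assoc]
        calc (κ₁ (U 0))⁻¹ * κ₁ (U 0) * θ ≤ 1 * θ :=
              mul_le_mul_left (ENNReal.inv_mul_le_one _) θ
          _ = θ := one_mul θ
      have hm₀R : θ ≤ m₀ (U 0 ×ˢ V 0) := by
        rw [hm₀eval _ subset_rfl]
        by_cases h0 : κ₁ (U 0) = 0
        · have hθ0 : θ = 0 := le_antisymm (h0 ▸ hcase) (zero_le)
          simp [hθ0]
        · rw [← mul_assoc, ENNReal.inv_mul_cancel h0 (measure_ne_top _ _), one_mul]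
      set κ₁' := κ₁ - m₀.map Prod.fst with hκ₁'
      have hκ₁'le : κ₁' ≤ κ₁ := Measure.sub_le
      haveI : IsFiniteMeasure κ₁' := isFiniteMeasure_of_le κ₁ hκ₁'le
      haveI : IsFiniteMeasure (m₀.map Prod.fst) := isFiniteMeasure_of_le κ₁ hm₀fst
      have hcancel : κ₁' + m₀.map Prod.fst = κ₁ := by
        rw [hκ₁']; exact Measure.sub_add_cancel_of_le hm₀fst
      set κ₂' := κ₂.restrict (V 0)ᶜ with hκ₂'
      haveI : IsFiniteMeasure κ₂' := by rw [hκ₂']; infer_instance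
      have hcov' : ∀ A' B' : Set ℝ, MeasurableSet A' → MeasurableSet B' →
          (A' ×ˢ B') ∩ (⋃ k : Fin n, U k.succ ×ˢ V k.succ) = ∅ →
          c - 2 * θ ≤ κ₁' A'ᶜ + κ₂' B'ᶜ := by
        intro A' B' hA' hB' hint
        have hB'' : MeasurableSet (B' ∩ (V 0)ᶜ) := hB'.inter (hV 0).compl
        have hSint : (A' ×ˢ (B' ∩ (V 0)ᶜ)) ∩ S = ∅ := by
          rw [hSdec, Set.inter_union_distrib_left]
          have e1 : (A' ×ˢ (B' ∩ (V 0)ᶜ)) ∩ (U 0 ×ˢ V 0) = ∅ := by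
            rw [Set.prod_inter_prod]
            have hBV : (B' ∩ (V 0)ᶜ) ∩ V 0 = ∅ := by
              rw [Set.inter_assoc, Set.compl_inter_self, Set.inter_empty]
            rw [hBV, Set.prod_empty]
          have e2 : (A' ×ˢ (B' ∩ (V 0)ᶜ)) ∩ S' = ∅ := by
            apply eq_empty_of_subset_empty
            calc (A' ×ˢ (B' ∩ (V 0)ᶜ)) ∩ S' ⊆ (A' ×ˢ B') ∩ S' :=
                  Set.inter_subset_inter_left _ (Set.prod_mono_right inter_subset_left)
              _ = ∅ := hint
          rw [e1, e2, Set.union_empty]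
        have hkey := hcov A' (B' ∩ (V 0)ᶜ) hA' hB'' hSint
        have hcompl : (B' ∩ (V 0)ᶜ)ᶜ = B'ᶜ ∪ V 0 := by rw [Set.compl_inter, compl_compl]
        have h2 : κ₂ ((B' ∩ (V 0)ᶜ)ᶜ) ≤ κ₂' B'ᶜ + θ := by
          rw [hcompl]
          have hsub : B'ᶜ ∪ V 0 ⊆ (B'ᶜ ∩ (V 0)ᶜ) ∪ V 0 := by
            intro x hx
            rcases hx with h | h
            · by_cases hxV : x ∈ V 0
              · exact Or.inr hxV
              · exact Or.inl ⟨h, hxV⟩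
            · exact Or.inr h
          calc κ₂ (B'ᶜ ∪ V 0) ≤ κ₂ ((B'ᶜ ∩ (V 0)ᶜ) ∪ V 0) := measure_mono hsub
            _ ≤ κ₂ (B'ᶜ ∩ (V 0)ᶜ) + θ := measure_union_le _ _
            _ = κ₂' B'ᶜ + θ := by rw [hκ₂', Measure.restrict_apply hB'.compl]
        have h1 : κ₁ A'ᶜ ≤ κ₁' A'ᶜ + θ := by
          have e : κ₁ A'ᶜ = κ₁' A'ᶜ + (m₀.map Prod.fst) A'ᶜ := by
            conv_lhs => rw [← hcancel]
            rw [Measure.add_apply]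
          rw [e]
          refine add_le_add le_rfl ?_
          calc (m₀.map Prod.fst) A'ᶜ ≤ (m₀.map Prod.fst) univ := measure_mono (subset_univ _)
            _ = m₀ univ := by rw [Measure.map_apply measurable_fst MeasurableSet.univ,
                Set.preimage_univ]
            _ ≤ θ := hm₀mass
        have hsum : κ₁ A'ᶜ + κ₂ ((B' ∩ (V 0)ᶜ)ᶜ) ≤ (κ₁' A'ᶜ + κ₂' B'ᶜ) + 2 * θ := by
          calc κ₁ A'ᶜ + κ₂ ((B' ∩ (V 0)ᶜ)ᶜ) ≤ (κ₁' A'ᶜ + θ) + (κ₂' B'ᶜ + θ) := add_le_add h1 h2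
            _ = (κ₁' A'ᶜ + κ₂' B'ᶜ) + 2 * θ := by ring
        exact tsub_le_iff_right.mpr (hkey.trans hsum)
      obtain ⟨m', hm'feas, hm'mass⟩ := IH (fun k => U k.succ) (fun k => V k.succ)
        (fun k => hU _) (fun k => hV _) κ₁' κ₂' inferInstance inferInstance (c - 2 * θ) hcov'
      refine ⟨m₀ + m', ⟨?_, ?_⟩, ?_⟩
      · rw [Measure.map_add _ _ measurable_fst]
        calc m₀.map Prod.fst + m'.map Prod.fst ≤ m₀.map Prod.fst + κ₁' :=
              add_le_add le_rfl hm'feas.1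
          _ = κ₁ := by rw [add_comm]; exact hcancel
      · rw [Measure.map_add _ _ measurable_snd]
        calc m₀.map Prod.snd + m'.map Prod.snd ≤ κ₂.restrict (V 0) + κ₂.restrict (V 0)ᶜ :=
              add_le_add hm₀snd hm'feas.2
          _ = κ₂ := Measure.restrict_add_restrict_compl (hV 0)
      · calc c / 2 ≤ θ + (c - 2 * θ) / 2 := half_le_add_half_sub c θ
          _ ≤ m₀ (U 0 ×ˢ V 0) + m' S' := add_le_add hm₀R hm'mass
          _ ≤ m₀ S + m' S := add_le_add (measure_mono h0S) (measure_mono hS'S)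
          _ = (m₀ + m') S := (Measure.add_apply _ _ _).symm
    · -- row removal, θ := κ₁ (U 0)
      set θ := κ₁ (U 0) with hθdef
      set m₀ := (κ₂ (V 0))⁻¹ • base with hm₀
      have hm₀eval : ∀ E : Set (ℝ × ℝ), U 0 ×ˢ V 0 ⊆ E →
          m₀ E = (κ₂ (V 0))⁻¹ * (θ * κ₂ (V 0)) := by
        intro E hE
        rw [hm₀, Measure.smul_apply, smul_eq_mul, hbase_eval E hE]
      have hfst : m₀.map Prod.fst = ((κ₂ (V 0))⁻¹ * κ₂ (V 0)) • κ₁.restrict (U 0) := by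
        rw [hm₀, Measure.map_smul, hbase, Measure.map_fst_prod, Measure.restrict_apply_univ,
          smul_smul]
      have hsnd : m₀.map Prod.snd = ((κ₂ (V 0))⁻¹ * θ) • κ₂.restrict (V 0) := by
        rw [hm₀, Measure.map_smul, hbase, Measure.map_snd_prod, Measure.restrict_apply_univ,
          smul_smul]
      have hfac1 : (κ₂ (V 0))⁻¹ * θ ≤ 1 :=
        (mul_le_mul_right hcase _).trans (ENNReal.inv_mul_le_one _)
      have hm₀snd2 : m₀.map Prod.snd ≤ κ₂ := by
        rw [hsnd]; exact smul_measure_le_of_le_one hfac1 Measure.restrict_le_self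
      have hm₀fst2 : m₀.map Prod.fst ≤ κ₁.restrict (U 0) := by
        rw [hfst]; exact smul_measure_le_of_le_one (ENNReal.inv_mul_le_one _) le_rfl
      have hm₀mass : m₀ univ ≤ θ := by
        rw [hm₀eval univ (subset_univ _), mul_comm θ (κ₂ (V 0)), ← mul_assoc]
        calc (κ₂ (V 0))⁻¹ * κ₂ (V 0) * θ ≤ 1 * θ :=
              mul_le_mul_left (ENNReal.inv_mul_le_one _) θ
          _ = θ := one_mul θ
      have hm₀R : θ ≤ m₀ (U 0 ×ˢ V 0) := by
        rw [hm₀eval _ subset_rfl]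
        by_cases h0 : κ₂ (V 0) = 0
        · have hθ0 : θ = 0 := le_antisymm (h0 ▸ hcase) (zero_le)
          simp [hθ0]
        · rw [mul_comm θ (κ₂ (V 0)), ← mul_assoc,
            ENNReal.inv_mul_cancel h0 (measure_ne_top _ _), one_mul]
      set κ₂'' := κ₂ - m₀.map Prod.snd with hκ₂''
      have hκ₂''le : κ₂'' ≤ κ₂ := Measure.sub_le
      haveI : IsFiniteMeasure κ₂'' := isFiniteMeasure_of_le κ₂ hκ₂''le
      haveI : IsFiniteMeasure (m₀.map Prod.snd) := isFiniteMeasure_of_le κ₂ hm₀snd2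
      have hcancel : κ₂'' + m₀.map Prod.snd = κ₂ := by
        rw [hκ₂'']; exact Measure.sub_add_cancel_of_le hm₀snd2
      set κ₁'' := κ₁.restrict (U 0)ᶜ with hκ₁''
      haveI : IsFiniteMeasure κ₁'' := by rw [hκ₁'']; infer_instance
      have hcov' : ∀ A' B' : Set ℝ, MeasurableSet A' → MeasurableSet B' →
          (A' ×ˢ B') ∩ (⋃ k : Fin n, U k.succ ×ˢ V k.succ) = ∅ →
          c - 2 * θ ≤ κ₁'' A'ᶜ + κ₂'' B'ᶜ := by
        intro A' B' hA' hB' hint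
        have hA'' : MeasurableSet (A' ∩ (U 0)ᶜ) := hA'.inter (hU 0).compl
        have hSint : ((A' ∩ (U 0)ᶜ) ×ˢ B') ∩ S = ∅ := by
          rw [hSdec, Set.inter_union_distrib_left]
          have e1 : ((A' ∩ (U 0)ᶜ) ×ˢ B') ∩ (U 0 ×ˢ V 0) = ∅ := by
            rw [Set.prod_inter_prod]
            have hAU : (A' ∩ (U 0)ᶜ) ∩ U 0 = ∅ := by
              rw [Set.inter_assoc, Set.compl_inter_self, Set.inter_empty]
            rw [hAU, Set.empty_prod]
          have e2 : ((A' ∩ (U 0)ᶜ) ×ˢ B') ∩ S' = ∅ := by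
            apply eq_empty_of_subset_empty
            calc ((A' ∩ (U 0)ᶜ) ×ˢ B') ∩ S' ⊆ (A' ×ˢ B') ∩ S' :=
                  Set.inter_subset_inter_left _ (Set.prod_mono_left inter_subset_left)
              _ = ∅ := hint
          rw [e1, e2, Set.union_empty]
        have hkey := hcov (A' ∩ (U 0)ᶜ) B' hA'' hB' hSint
        have hcompl : (A' ∩ (U 0)ᶜ)ᶜ = A'ᶜ ∪ U 0 := by rw [Set.compl_inter, compl_compl]
        have h1 : κ₁ ((A' ∩ (U 0)ᶜ)ᶜ) ≤ κ₁'' A'ᶜ + θ := by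
          rw [hcompl]
          have hsub : A'ᶜ ∪ U 0 ⊆ (A'ᶜ ∩ (U 0)ᶜ) ∪ U 0 := by
            intro x hx
            rcases hx with h | h
            · by_cases hxU : x ∈ U 0
              · exact Or.inr hxU
              · exact Or.inl ⟨h, hxU⟩
            · exact Or.inr h
          calc κ₁ (A'ᶜ ∪ U 0) ≤ κ₁ ((A'ᶜ ∩ (U 0)ᶜ) ∪ U 0) := measure_mono hsub
            _ ≤ κ₁ (A'ᶜ ∩ (U 0)ᶜ) + θ := measure_union_le _ _
            _ = κ₁'' A'ᶜ + θ := by rw [hκ₁'', Measure.restrict_apply hA'.compl]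
        have h2 : κ₂ B'ᶜ ≤ κ₂'' B'ᶜ + θ := by
          have e : κ₂ B'ᶜ = κ₂'' B'ᶜ + (m₀.map Prod.snd) B'ᶜ := by
            conv_lhs => rw [← hcancel]
            rw [Measure.add_apply]
          rw [e]
          refine add_le_add le_rfl ?_
          calc (m₀.map Prod.snd) B'ᶜ ≤ (m₀.map Prod.snd) univ := measure_mono (subset_univ _)
            _ = m₀ univ := by rw [Measure.map_apply measurable_snd MeasurableSet.univ,
                Set.preimage_univ]
            _ ≤ θ := hm₀mass
        have hsum : κ₁ ((A' ∩ (U 0)ᶜ)ᶜ) + κ₂ B'ᶜ ≤ (κ₁'' A'ᶜ + κ₂'' B'ᶜ) + 2 * θ := by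
          calc κ₁ ((A' ∩ (U 0)ᶜ)ᶜ) + κ₂ B'ᶜ ≤ (κ₁'' A'ᶜ + θ) + (κ₂'' B'ᶜ + θ) := add_le_add h1 h2
            _ = (κ₁'' A'ᶜ + κ₂'' B'ᶜ) + 2 * θ := by ring
        exact tsub_le_iff_right.mpr (hkey.trans hsum)
      obtain ⟨m', hm'feas, hm'mass⟩ := IH (fun k => U k.succ) (fun k => V k.succ)
        (fun k => hU _) (fun k => hV _) κ₁'' κ₂'' inferInstance inferInstance (c - 2 * θ) hcov'
      refine ⟨m₀ + m', ⟨?_, ?_⟩, ?_⟩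
      · rw [Measure.map_add _ _ measurable_fst]
        calc m₀.map Prod.fst + m'.map Prod.fst ≤ κ₁.restrict (U 0) + κ₁.restrict (U 0)ᶜ :=
              add_le_add hm₀fst2 hm'feas.1
          _ = κ₁ := Measure.restrict_add_restrict_compl (hU 0)
      · rw [Measure.map_add _ _ measurable_snd]
        calc m₀.map Prod.snd + m'.map Prod.snd ≤ m₀.map Prod.snd + κ₂'' :=
              add_le_add le_rfl hm'feas.2
          _ = κ₂ := by rw [add_comm]; exact hcancel
      · calc c / 2 ≤ θ + (c - 2 * θ) / 2 := half_le_add_half_sub c θ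
          _ ≤ m₀ (U 0 ×ˢ V 0) + m' S' := add_le_add hm₀R hm'mass
          _ ≤ m₀ S + m' S := add_le_add (measure_mono h0S) (measure_mono hS'S)
          _ = (m₀ + m') S := (Measure.add_apply _ _ _).symm


/-- a fixed ultrafilter extending `atTop` on `ℕ`. -/
def UF : Ultrafilter ℕ := Ultrafilter.of Filter.atTop

lemma UF_le_atTop : (UF : Filter ℕ) ≤ (Filter.atTop : Filter ℕ) := Ultrafilter.of_le _

lemma exists_ulim (g : ℕ → ℝ≥0∞) : ∃ L, Tendsto g (UF : Filter ℕ) (𝓝 L) := by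
  obtain ⟨L, -, hL⟩ := isCompact_univ.ultrafilter_le_nhds (UF.map g) (by simp)
  rw [Ultrafilter.coe_map] at hL
  exact ⟨L, hL⟩

/-- ultrafilter limit in `ℝ≥0∞`. -/
def ulim (g : ℕ → ℝ≥0∞) : ℝ≥0∞ := (exists_ulim g).choose

lemma tendsto_ulim (g : ℕ → ℝ≥0∞) : Tendsto g (UF : Filter ℕ) (𝓝 (ulim g)) :=
  (exists_ulim g).choose_spec

lemma ulim_unique {g : ℕ → ℝ≥0∞} {L : ℝ≥0∞} (h : Tendsto g (UF : Filter ℕ) (𝓝 L)) :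
    ulim g = L := tendsto_nhds_unique (tendsto_ulim g) h

lemma ulim_le_ulim {g h : ℕ → ℝ≥0∞} (hgh : ∀ j, g j ≤ h j) : ulim g ≤ ulim h :=
  le_of_tendsto_of_tendsto' (tendsto_ulim g) (tendsto_ulim h) hgh

lemma ulim_le_const {g : ℕ → ℝ≥0∞} {c : ℝ≥0∞} (h : ∀ j, g j ≤ c) : ulim g ≤ c :=
  le_of_tendsto' (tendsto_ulim g) h

lemma const_le_ulim {g : ℕ → ℝ≥0∞} {c : ℝ≥0∞} (h : ∀ᶠ j in (UF : Filter ℕ), c ≤ g j) :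
    c ≤ ulim g := ge_of_tendsto (tendsto_ulim g) h

lemma ulim_add (g h : ℕ → ℝ≥0∞) : ulim (fun j => g j + h j) = ulim g + ulim h :=
  ulim_unique ((tendsto_ulim g).add (tendsto_ulim h))

lemma ulim_add_le {g h k : ℕ → ℝ≥0∞} (hle : ∀ j, g j ≤ h j + k j) :
    ulim g ≤ ulim h + ulim k := by
  rw [← ulim_add]; exact ulim_le_ulim hle

lemma le_ulim_add {g h k : ℕ → ℝ≥0∞} (hle : ∀ j, h j + k j ≤ g j) :
    ulim h + ulim k ≤ ulim g := by
  rw [← ulim_add]; exact ulim_le_ulim hle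

/-- From a finitely-additive-like set function on `ℝ × ℝ`, dominated and
superadditive on disjoint open sets, construct a Borel measure below it on
opens and above its open-regularization on compacts. -/
lemma exists_measure_of_premeasure (μ₀ : Set (ℝ × ℝ) → ℝ≥0∞)
    (hmono : ∀ C C', C ⊆ C' → μ₀ C ≤ μ₀ C')
    (hbound : μ₀ univ ≤ 1)
    (hsub : ∀ C C', μ₀ (C ∪ C') ≤ μ₀ C + μ₀ C')
    (hadd : ∀ U U' : Set (ℝ × ℝ), IsOpen U → IsOpen U' → Disjoint U U' →
      μ₀ U + μ₀ U' ≤ μ₀ (U ∪ U')) :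
    ∃ m : Measure (ℝ × ℝ),
      (∀ G : Set (ℝ × ℝ), IsOpen G → m G ≤ μ₀ G) ∧
      (∀ K : Set (ℝ × ℝ), IsCompact K →
        (⨅ (G : Set (ℝ × ℝ)) (_ : IsOpen G) (_ : K ⊆ G), μ₀ G) ≤ m K) := by
  set tE : Set (ℝ × ℝ) → ℝ≥0∞ :=
    fun K => ⨅ (G : Set (ℝ × ℝ)) (_ : IsOpen G) (_ : K ⊆ G), μ₀ G with htE
  have htE_le : ∀ K (G : Set (ℝ × ℝ)), IsOpen G → K ⊆ G → tE K ≤ μ₀ G := by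
    intro K G hG hKG
    exact (iInf_le _ G).trans ((iInf_le _ hG).trans (iInf_le _ hKG))
  have htE_bound : ∀ K, tE K ≤ 1 :=
    fun K => (htE_le K univ isOpen_univ (subset_univ _)).trans hbound
  have htE_ne_top : ∀ K, tE K ≠ ∞ := fun K => ((htE_bound K).trans_lt (by norm_num)).ne
  have htE_mono : ∀ K K' : Set (ℝ × ℝ), K ⊆ K' → tE K ≤ tE K' := by
    intro K K' hKK'
    refine le_iInf fun G => le_iInf fun hG => le_iInf fun hK'G => ?_
    exact htE_le K G hG (hKK'.trans hK'G)
  have htE_exists : ∀ (K : Set (ℝ × ℝ)) (ε : ℝ≥0∞), 0 < ε →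
      ∃ G, IsOpen G ∧ K ⊆ G ∧ μ₀ G < tE K + ε := by
    intro K ε hε
    have : tE K < tE K + ε := ENNReal.lt_add_right (htE_ne_top K) hε.ne'
    rw [htE] at this
    simp only [iInf_lt_iff] at this
    obtain ⟨G, hG, hKG, hlt⟩ := this
    exact ⟨G, hG, hKG, hlt⟩
  have htE_union_le : ∀ K₁ K₂ : Set (ℝ × ℝ), tE (K₁ ∪ K₂) ≤ tE K₁ + tE K₂ := by
    intro K₁ K₂
    refine ENNReal.le_of_forall_pos_le_add fun ε hε hfin => ?_
    have hε2 : (0:ℝ≥0∞) < ε / 2 := by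
      simp [ENNReal.div_pos_iff, hε.ne']
    obtain ⟨G₁, hG₁, hK₁, hlt₁⟩ := htE_exists K₁ (ε / 2) hε2
    obtain ⟨G₂, hG₂, hK₂, hlt₂⟩ := htE_exists K₂ (ε / 2) hε2
    calc tE (K₁ ∪ K₂) ≤ μ₀ (G₁ ∪ G₂) :=
          htE_le _ _ (hG₁.union hG₂) (union_subset_union hK₁ hK₂)
      _ ≤ μ₀ G₁ + μ₀ G₂ := hsub _ _
      _ ≤ (tE K₁ + ε / 2) + (tE K₂ + ε / 2) := add_le_add hlt₁.le hlt₂.le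
      _ = tE K₁ + tE K₂ + (ε / 2 + ε / 2) := by ring
      _ = tE K₁ + tE K₂ + ε := by rw [ENNReal.add_halves]
  have htE_disjoint : ∀ K₁ K₂ : Set (ℝ × ℝ), IsCompact K₁ → IsCompact K₂ →
      Disjoint K₁ K₂ → tE K₁ + tE K₂ ≤ tE (K₁ ∪ K₂) := by
    intro K₁ K₂ hK₁ hK₂ hdis
    obtain ⟨V₁, V₂, hV₁, hV₂, hKV₁, hKV₂, hVdis⟩ :=
      SeparatedNhds.of_isCompact_isCompact hK₁ hK₂ hdis
    refine le_iInf fun G => le_iInf fun hG => le_iInf fun hKG => ?_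
    have h1 : tE K₁ ≤ μ₀ (G ∩ V₁) :=
      htE_le _ _ (hG.inter hV₁) (subset_inter ((subset_union_left).trans hKG) hKV₁)
    have h2 : tE K₂ ≤ μ₀ (G ∩ V₂) :=
      htE_le _ _ (hG.inter hV₂) (subset_inter ((subset_union_right).trans hKG) hKV₂)
    calc tE K₁ + tE K₂ ≤ μ₀ (G ∩ V₁) + μ₀ (G ∩ V₂) := add_le_add h1 h2
      _ ≤ μ₀ ((G ∩ V₁) ∪ (G ∩ V₂)) := hadd _ _ (hG.inter hV₁) (hG.inter hV₂)
          (hVdis.mono inter_subset_right inter_subset_right)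
      _ ≤ μ₀ G := hmono _ _ (union_subset inter_subset_left inter_subset_left)
  set C : Content (ℝ × ℝ) :=
    { toFun := fun K => (tE K).toNNReal
      mono' := by
        intro K₁ K₂ h
        exact ENNReal.toNNReal_mono (htE_ne_top _) (htE_mono _ _ h)
      sup_disjoint' := by
        intro K₁ K₂ hdis _ _
        have h1 : tE ((K₁ ⊔ K₂ : TopologicalSpace.Compacts (ℝ × ℝ)) : Set (ℝ × ℝ))
            = tE K₁ + tE K₂ := by
          rw [TopologicalSpace.Compacts.coe_sup]
          exact le_antisymm (htE_union_le _ _)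
            (htE_disjoint _ _ K₁.isCompact K₂.isCompact hdis)
        simp only [h1]
        rw [ENNReal.toNNReal_add (htE_ne_top _) (htE_ne_top _)]
      sup_le' := by
        intro K₁ K₂
        have h1 : tE ((K₁ ⊔ K₂ : TopologicalSpace.Compacts (ℝ × ℝ)) : Set (ℝ × ℝ))
            ≤ tE K₁ + tE K₂ := by
          rw [TopologicalSpace.Compacts.coe_sup]; exact htE_union_le _ _
        calc (tE ((K₁ ⊔ K₂ : TopologicalSpace.Compacts (ℝ × ℝ)) : Set (ℝ × ℝ))).toNNReal
            ≤ (tE K₁ + tE K₂).toNNReal := ENNReal.toNNReal_mono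
              (ENNReal.add_ne_top.mpr ⟨htE_ne_top _, htE_ne_top _⟩) h1
          _ = (tE K₁).toNNReal + (tE K₂).toNNReal :=
              ENNReal.toNNReal_add (htE_ne_top _) (htE_ne_top _) } with hC
  have hCcoe : ∀ K : TopologicalSpace.Compacts (ℝ × ℝ), (C K : ℝ≥0∞) = tE K := by
    intro K
    show ((tE K.1).toNNReal : ℝ≥0∞) = tE K.1
    exact ENNReal.coe_toNNReal (htE_ne_top _)
  refine ⟨C.measure, ?_, ?_⟩
  · intro G hG
    rw [C.measure_apply hG.measurableSet, C.outerMeasure_of_isOpen G hG,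
      Content.innerContent]
    refine iSup₂_le fun K hKG => ?_
    rw [hCcoe]
    exact htE_le _ _ hG hKG
  · intro K hK
    rw [C.measure_apply hK.isClosed.measurableSet, Content.outerMeasure_eq_iInf]
    refine le_iInf fun G => le_iInf fun hG => le_iInf fun hKG => ?_
    have h := C.le_innerContent ⟨K, hK⟩ ⟨G, hG⟩ hKG
    rw [hCcoe] at h
    exact h


lemma vol_Ioo_ne_top : (volume.restrict (Ioo (0:ℝ) 1)) univ ≠ ∞ := by
  rw [Measure.restrict_apply_univ]
  simp

lemma le_restrict_vol_apply {κ : Measure ℝ} (hκ : κ ≤ volume.restrict (Ioo (0:ℝ) 1))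
    (E : Set ℝ) : κ E ≤ volume E :=
  (hκ E).trans ((Measure.restrict_le_self E))

lemma shrink {S : Set (ℝ × ℝ)} (hS : IsFinUnionRect S) {κ₁ κ₂ : Measure ℝ}
    (hκ₁ : κ₁ ≤ volume.restrict (Ioo (0:ℝ) 1)) (hκ₂ : κ₂ ≤ volume.restrict (Ioo (0:ℝ) 1))
    {δ : ℝ≥0∞} (hδ : δ ≠ 0) :
    ∃ F, IsCompact F ∧ F ⊆ S ∧ ∀ m, Feas κ₁ κ₂ m → m (S \ F) ≤ δ := by
  obtain ⟨n, R, hR, rfl⟩ := hS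
  choose U V hU hV hU1 hV1 hRk using hR
  set δ' : ℝ≥0∞ := δ / (2 * (n + 1)) with hδ'
  have hδ'0 : δ' ≠ 0 := by
    rw [hδ', ne_eq, ENNReal.div_eq_zero_iff]
    rintro (h | h)
    · exact hδ h
    · exact ENNReal.mul_ne_top (by norm_num)
        (by simp [ENNReal.natCast_ne_top]) h
  have finU : ∀ k, volume (U k) ≠ ∞ := by
    intro k
    refine (lt_of_le_of_lt (measure_mono (hU1 k)) ?_).ne
    simp
  have finV : ∀ k, volume (V k) ≠ ∞ := by
    intro k
    refine (lt_of_le_of_lt (measure_mono (hV1 k)) ?_).ne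
    simp
  choose K hKU hKcomp hKvol using fun k => (hU k).exists_isCompact_diff_lt (finU k) hδ'0
  choose L hLV hLcomp hLvol using fun k => (hV k).exists_isCompact_diff_lt (finV k) hδ'0
  refine ⟨⋃ k, K k ×ˢ L k, isCompact_iUnion (fun k => (hKcomp k).prod (hLcomp k)), ?_, ?_⟩
  · refine Set.iUnion_mono fun k => ?_
    rw [hRk k]
    exact Set.prod_mono (hKU k) (hLV k)
  · intro m hm
    have hsub : (⋃ k, R k) \ (⋃ k, K k ×ˢ L k) ⊆
        ⋃ k, (((U k \ K k) ×ˢ (univ : Set ℝ)) ∪ ((univ : Set ℝ) ×ˢ (V k \ L k))) := by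
      rintro ⟨x, y⟩ ⟨hx, hxF⟩
      simp only [Set.mem_iUnion] at hx ⊢
      obtain ⟨k, hk⟩ := hx
      rw [hRk k] at hk
      refine ⟨k, ?_⟩
      by_cases hxK : x ∈ K k
      · right
        refine ⟨mem_univ x, hk.2, fun hyL => hxF ?_⟩
        exact Set.mem_iUnion.mpr ⟨k, hxK, hyL⟩
      · left
        exact ⟨⟨hk.1, hxK⟩, mem_univ y⟩
    have hkbound : ∀ k, m (((U k \ K k) ×ˢ (univ : Set ℝ)) ∪
        ((univ : Set ℝ) ×ˢ (V k \ L k))) ≤ δ' + δ' := by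
      intro k
      have h1 : m ((U k \ K k) ×ˢ (univ : Set ℝ)) ≤ δ' := by
        refine (hm.fst_apply ((hU k).diff (hKcomp k).isClosed.measurableSet)).trans ?_
        exact ((le_restrict_vol_apply hκ₁ _).trans (hKvol k).le)
      have h2 : m ((univ : Set ℝ) ×ˢ (V k \ L k)) ≤ δ' := by
        refine (hm.snd_apply ((hV k).diff (hLcomp k).isClosed.measurableSet)).trans ?_
        exact ((le_restrict_vol_apply hκ₂ _).trans (hLvol k).le)
      exact (measure_union_le _ _).trans (add_le_add h1 h2)
    calc m ((⋃ k, R k) \ ⋃ k, K k ×ˢ L k)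
        ≤ m (⋃ k, (((U k \ K k) ×ˢ (univ : Set ℝ)) ∪ ((univ : Set ℝ) ×ˢ (V k \ L k)))) :=
          measure_mono hsub
      _ ≤ ∑ k, m (((U k \ K k) ×ˢ (univ : Set ℝ)) ∪ ((univ : Set ℝ) ×ˢ (V k \ L k))) :=
          measure_iUnion_fintype_le _ _
      _ ≤ ∑ _k : Fin n, (δ' + δ') := Finset.sum_le_sum fun k _ => hkbound k
      _ = (n : ℝ≥0∞) * (δ' + δ') := by
          rw [Finset.sum_const, Finset.card_univ, Fintype.card_fin, nsmul_eq_mul]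
      _ ≤ (2 * (n + 1) : ℝ≥0∞) * δ' := by
          rw [mul_add, two_mul]
          have : (n : ℝ≥0∞) * δ' + (n : ℝ≥0∞) * δ' ≤
              ((n:ℝ≥0∞) + 1) * δ' + ((n:ℝ≥0∞) + 1) * δ' := by
            gcongr <;> simp
          refine this.trans ?_
          apply le_of_eq
          ring
      _ ≤ δ := ENNReal.mul_div_le

lemma tsum_eps_half (ε : ℝ≥0∞) : ∑' j : ℕ, ε / 2 ^ (j + 2) = ε / 2 := by
  have h : ∀ j : ℕ, ε / 2 ^ (j + 2) = ε * 4⁻¹ * 2⁻¹ ^ j := by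
    intro j
    have h2 : (2:ℝ≥0∞) ^ (j + 2) = 2 ^ j * 4 := by rw [pow_add]; norm_num
    rw [div_eq_mul_inv, h2,
      ENNReal.mul_inv (Or.inl (by positivity)) (Or.inl (ENNReal.pow_ne_top (by norm_num))),
      ← ENNReal.inv_pow]
    ring
  rw [tsum_congr h, ENNReal.tsum_mul_left, ENNReal.tsum_geometric, ENNReal.one_sub_inv_two,
    inv_inv, mul_assoc, div_eq_mul_inv]
  congr 1
  rw [show (4:ℝ≥0∞)⁻¹ = 2⁻¹ * 2⁻¹ by
      rw [← ENNReal.mul_inv (by norm_num) (by norm_num)]; norm_num,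
    mul_assoc, ENNReal.inv_mul_cancel (by norm_num) (by norm_num), mul_one]

lemma isFiniteRestrictIoo : IsFiniteMeasure (volume.restrict (Ioo (0:ℝ) 1)) := by
  constructor
  rw [Measure.restrict_apply_univ]
  simp

lemma lemmaA (κ₁ κ₂ : Measure ℝ)
    (hκ₁ : κ₁ ≤ volume.restrict (Ioo (0:ℝ) 1)) (hκ₂ : κ₂ ≤ volume.restrict (Ioo (0:ℝ) 1))
    (T : ℕ → Set (ℝ × ℝ)) (hT : ∀ J, IsFinUnionRect (T J)) (hTanti : Antitone T)
    (c : ℝ≥0∞) (hc : ∀ J, ∃ m, Feas κ₁ κ₂ m ∧ c ≤ m (T J)) {ε : ℝ≥0∞} (hε : ε ≠ 0) :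
    ∃ m, Feas κ₁ κ₂ m ∧ c - ε ≤ m (⋂ J, T J) := by
  haveI hfinI := isFiniteRestrictIoo
  haveI : IsFiniteMeasure κ₁ := isFiniteMeasure_of_le _ hκ₁
  haveI : IsFiniteMeasure κ₂ := isFiniteMeasure_of_le _ hκ₂
  have hshr : ∀ J : ℕ, ∃ F, IsCompact F ∧ F ⊆ T J ∧
      ∀ m, Feas κ₁ κ₂ m → m (T J \ F) ≤ ε / 2 ^ (J + 2) := by
    intro J
    refine shrink (hT J) hκ₁ hκ₂ ?_
    rw [ne_eq, ENNReal.div_eq_zero_iff]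
    rintro (h | h)
    · exact hε h
    · exact ENNReal.pow_ne_top (by norm_num) h
  choose F hFcomp hFsub hFbound using hshr
  set F' : ℕ → Set (ℝ × ℝ) := fun J => ⋂ j, ⋂ (_ : j ≤ J), F j with hF'
  have hF'sub : ∀ J j, j ≤ J → F' J ⊆ F j := by
    intro J j hj x hx
    simp only [hF', Set.mem_iInter] at hx
    exact hx j hj
  have hF'closed : ∀ J, IsClosed (F' J) :=
    fun J => isClosed_iInter fun j => isClosed_iInter fun _ => (hFcomp j).isClosed
  have hF'comp : ∀ J, IsCompact (F' J) := fun J =>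
    (hFcomp 0).of_isClosed_subset (hF'closed J) (hF'sub J 0 (Nat.zero_le J))
  have hF'anti : Antitone F' := by
    intro a b hab x hx
    simp only [hF', Set.mem_iInter] at hx ⊢
    exact fun j hj => hx j (hj.trans hab)
  choose mJ hmJfeas hmJmass using hc
  have hlow : ∀ i J, i ≤ J → c ≤ mJ J (F' i) + ε / 2 := by
    intro i J hiJ
    have hdecomp : T J ⊆ F' J ∪ ⋃ j, ⋃ (_ : j ≤ J), (T j \ F j) := by
      intro x hx
      by_cases hxF : x ∈ F' J
      · exact Or.inl hxF
      · right
        simp only [hF', Set.mem_iInter, not_forall] at hxF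
        obtain ⟨j, hj, hxFj⟩ := hxF
        simp only [Set.mem_iUnion]
        exact ⟨j, hj, hTanti hj hx, hxFj⟩
    have hround : mJ J (⋃ j, ⋃ (_ : j ≤ J), (T j \ F j)) ≤ ε / 2 := by
      have e : (⋃ j, ⋃ (_ : j ≤ J), (T j \ F j)) = ⋃ j ∈ Finset.range (J + 1), (T j \ F j) := by
        ext x
        simp [Nat.lt_succ_iff]
      rw [e]
      calc mJ J (⋃ j ∈ Finset.range (J + 1), (T j \ F j))
          ≤ ∑ j ∈ Finset.range (J + 1), mJ J (T j \ F j) := measure_biUnion_finset_le _ _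
        _ ≤ ∑ j ∈ Finset.range (J + 1), ε / 2 ^ (j + 2) :=
            Finset.sum_le_sum fun j _ => hFbound j (mJ J) (hmJfeas J)
        _ ≤ ∑' j : ℕ, ε / 2 ^ (j + 2) := ENNReal.sum_le_tsum _
        _ = ε / 2 := tsum_eps_half ε
    calc c ≤ mJ J (T J) := hmJmass J
      _ ≤ mJ J (F' J ∪ ⋃ j, ⋃ (_ : j ≤ J), (T j \ F j)) := measure_mono hdecomp
      _ ≤ mJ J (F' J) + mJ J (⋃ j, ⋃ (_ : j ≤ J), (T j \ F j)) := measure_union_le _ _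
      _ ≤ mJ J (F' J) + ε / 2 := add_le_add le_rfl hround
      _ ≤ mJ J (F' i) + ε / 2 := add_le_add (measure_mono (hF'anti hiJ)) le_rfl
  set μ₀ : Set (ℝ × ℝ) → ℝ≥0∞ := fun C => ulim (fun J => mJ J C) with hμ₀
  have hmassJ : ∀ (J : ℕ) (C : Set (ℝ × ℝ)), mJ J C ≤ 1 := by
    intro J C
    refine (measure_mono (subset_univ C)).trans ?_
    refine (hmJfeas J).mass.trans ?_
    refine (hκ₁ univ).trans ?_
    rw [Measure.restrict_apply_univ]
    simp
  obtain ⟨m, hmopen, hmcomp⟩ := exists_measure_of_premeasure μ₀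
    (fun C C' h => ulim_le_ulim (fun J => measure_mono h))
    (ulim_le_const (fun J => hmassJ J univ))
    (fun C C' => ulim_add_le (fun J => measure_union_le _ _))
    (fun Uo Uo' hUo hUo' hdis => le_ulim_add (fun J =>
      (measure_union hdis hUo'.measurableSet).ge))
  have hfeas : Feas κ₁ κ₂ m := by
    constructor
    · rw [Measure.le_iff]
      intro A hA
      rw [Measure.map_apply measurable_fst hA]
      have hopen : ∀ G : Set ℝ, IsOpen G → m (Prod.fst ⁻¹' G) ≤ κ₁ G := by
        intro G hG
        have e : (Prod.fst : ℝ × ℝ → ℝ) ⁻¹' G = G ×ˢ univ := by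
          ext ⟨x, y⟩; simp
        rw [e]
        refine (hmopen _ (hG.prod isOpen_univ)).trans ?_
        exact ulim_le_const fun J => (hmJfeas J).fst_apply hG.measurableSet
      rw [Set.measure_eq_iInf_isOpen A κ₁]
      refine le_iInf fun G => le_iInf fun hAG => le_iInf fun hG => ?_
      exact (measure_mono (Set.preimage_mono hAG)).trans (hopen G hG)
    · rw [Measure.le_iff]
      intro B hB
      rw [Measure.map_apply measurable_snd hB]
      have hopen : ∀ G : Set ℝ, IsOpen G → m (Prod.snd ⁻¹' G) ≤ κ₂ G := by
        intro G hG
        have e : (Prod.snd : ℝ × ℝ → ℝ) ⁻¹' G = univ ×ˢ G := by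
          ext ⟨x, y⟩; simp
        rw [e]
        refine (hmopen _ (isOpen_univ.prod hG)).trans ?_
        exact ulim_le_const fun J => (hmJfeas J).snd_apply hG.measurableSet
      rw [Set.measure_eq_iInf_isOpen B κ₂]
      refine le_iInf fun G => le_iInf fun hBG => le_iInf fun hG => ?_
      exact (measure_mono (Set.preimage_mono hBG)).trans (hopen G hG)
  set Kstar := ⋂ J, F' J with hKstar
  have hKT : Kstar ⊆ ⋂ J, T J := by
    intro x hx
    rw [Set.mem_iInter] at hx ⊢
    exact fun J => hFsub J (hF'sub J J le_rfl (hx J))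
  have hKcomp : IsCompact Kstar :=
    (hF'comp 0).of_isClosed_subset (isClosed_iInter hF'closed)
      (Set.iInter_subset _ 0)
  have hKm : c - ε ≤ m Kstar := by
    refine le_trans ?_ (hmcomp Kstar hKcomp)
    refine le_iInf fun G => le_iInf fun hG => le_iInf fun hKG => ?_
    have hex : ∃ N, F' N ⊆ G := by
      by_contra hcon
      push_neg at hcon
      have hne : ∀ N, (F' N ∩ Gᶜ).Nonempty := by
        intro N
        obtain ⟨x, hx1, hx2⟩ := Set.not_subset.mp (hcon N)
        exact ⟨x, hx1, hx2⟩
      have hnonempty := IsCompact.nonempty_iInter_of_sequence_nonempty_isCompact_isClosed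
        (fun N => F' N ∩ Gᶜ)
        (fun N => Set.inter_subset_inter_left _ (hF'anti (Nat.le_succ N)))
        hne
        ((hF'comp 0).inter_right hG.isClosed_compl)
        (fun N => (hF'closed N).inter hG.isClosed_compl)
      obtain ⟨x, hx⟩ := hnonempty
      rw [Set.mem_iInter] at hx
      have hxK : x ∈ Kstar := by
        rw [hKstar, Set.mem_iInter]
        exact fun N => (hx N).1
      exact (hx 0).2 (hKG hxK)
    obtain ⟨N, hN⟩ := hex
    calc c - ε ≤ c - ε / 2 := tsub_le_tsub_left (ENNReal.half_le_self) c
      _ ≤ μ₀ (F' N) := by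
          refine const_le_ulim ?_
          refine Filter.Eventually.filter_mono UF_le_atTop ?_
          refine Filter.eventually_atTop.mpr ⟨N, fun J hJ => ?_⟩
          exact tsub_le_iff_right.mpr (hlow N J hJ)
      _ ≤ μ₀ G := ulim_le_ulim fun J => measure_mono hN
  exact ⟨m, hfeas, hKm.trans (measure_mono hKT)⟩

lemma biInter_le_zero' {α : Type*} (f : ℕ → Set α) : (⋂ j, ⋂ (_ : j ≤ 0), f j) = f 0 := by
  ext x; simp [Nat.le_zero]

lemma biInter_le_succ' {α : Type*} (f : ℕ → Set α) (J : ℕ) :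
    (⋂ j, ⋂ (_ : j ≤ J + 1), f j) = (⋂ j, ⋂ (_ : j ≤ J), f j) ∩ f (J + 1) := by
  ext x
  simp only [Set.mem_iInter, Set.mem_inter_iff]
  constructor
  · intro h
    exact ⟨fun j hj => h j (hj.trans (Nat.le_succ J)), h (J + 1) le_rfl⟩
  · rintro ⟨h1, h2⟩ j hj
    by_cases hj' : j ≤ J
    · exact h1 j hj'
    · have he : j = J + 1 := by omega
      subst he
      exact h2

lemma exists_density_set {κ : Measure ℝ} (hκ : κ ≤ volume.restrict (Ioo (0:ℝ) 1))
    (hκ0 : κ ≠ 0) :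
    ∃ (A : Set ℝ) (δ : ℝ≥0∞), MeasurableSet A ∧ A ⊆ Ioo (0:ℝ) 1 ∧ 0 < volume A ∧
      0 < δ ∧ δ ≤ 1 ∧ δ • ((volume.restrict (Ioo (0:ℝ) 1)).restrict A) ≤ κ := by
  haveI hfinI := isFiniteRestrictIoo
  haveI : IsFiniteMeasure κ := isFiniteMeasure_of_le _ hκ
  set σ : Measure ℝ := volume.restrict (Ioo (0:ℝ) 1) with hσ
  have hac : κ ≪ σ := hκ.absolutelyContinuous
  set f := κ.rnDeriv σ with hf
  have hfmeas : Measurable f := Measure.measurable_rnDeriv _ _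
  have hwd : σ.withDensity f = κ := Measure.withDensity_rnDeriv_eq κ σ hac
  have hex : ∃ n : ℕ, 0 < σ {x | ((n:ℝ≥0∞) + 1)⁻¹ ≤ f x} := by
    by_contra hcon
    push_neg at hcon
    have hzero : ∀ n : ℕ, σ {x | ((n:ℝ≥0∞) + 1)⁻¹ ≤ f x} = 0 :=
      fun n => le_antisymm (hcon n) (zero_le)
    have hfz : f =ᵐ[σ] 0 := by
      have hsub : {x | f x ≠ 0} ⊆ ⋃ n : ℕ, {x | ((n:ℝ≥0∞) + 1)⁻¹ ≤ f x} := by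
        intro x hx
        simp only [Set.mem_setOf_eq, ne_eq] at hx
        obtain ⟨n, hn⟩ := ENNReal.exists_inv_nat_lt hx
        refine Set.mem_iUnion.mpr ⟨n, ?_⟩
        simp only [Set.mem_setOf_eq]
        calc ((n:ℝ≥0∞) + 1)⁻¹ ≤ ((n:ℝ≥0∞))⁻¹ := by
              gcongr
              exact le_add_right le_rfl
          _ ≤ f x := hn.le
      have hz : σ {x | f x ≠ 0} = 0 :=
        le_antisymm ((measure_mono hsub).trans
          (le_of_eq ((measure_iUnion_null_iff).mpr hzero))) (zero_le)
      filter_upwards [measure_eq_zero_iff_ae_notMem.mp hz] with x hx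
      simpa using hx
    have hk0 : κ = 0 := by
      rw [← hwd, withDensity_congr_ae hfz, withDensity_zero]
    exact hκ0 hk0
  obtain ⟨n, hn⟩ := hex
  set δ : ℝ≥0∞ := ((n:ℝ≥0∞) + 1)⁻¹ with hδ
  have hsm : MeasurableSet {x | δ ≤ f x} := hfmeas measurableSet_Ici
  set A := {x | δ ≤ f x} ∩ Ioo (0:ℝ) 1 with hA
  have hAmeas : MeasurableSet A := hsm.inter measurableSet_Ioo
  have hAIoo : A ⊆ Ioo (0:ℝ) 1 := inter_subset_right
  have hσA : σ A = σ {x | δ ≤ f x} := by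
    rw [hσ, Measure.restrict_apply hAmeas, Measure.restrict_apply hsm]
    congr 1
    rw [hA, Set.inter_assoc, Set.inter_self]
  have hvolA : 0 < volume A := by
    have h1 : 0 < σ A := by rw [hσA]; exact hn
    exact h1.trans_le (le_restrict_vol_apply le_rfl A)
  refine ⟨A, δ, hAmeas, hAIoo, hvolA, ?_, ?_, ?_⟩
  · rw [hδ, ENNReal.inv_pos]
    exact ENNReal.add_ne_top.mpr ⟨ENNReal.natCast_ne_top n, by norm_num⟩
  · rw [hδ]
    exact ENNReal.inv_le_one.mpr (le_add_self)
  · rw [Measure.le_iff]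
    intro E hE
    have h1 : (δ • (σ.restrict A)) E = δ * σ (E ∩ A) := by
      rw [Measure.smul_apply, smul_eq_mul, Measure.restrict_apply hE]
    have h2 : δ * σ (E ∩ A) = ∫⁻ _ in E ∩ A, δ ∂σ := by
      rw [setLIntegral_const, mul_comm]
    have h3 : ∫⁻ _ in E ∩ A, δ ∂σ ≤ ∫⁻ x in E ∩ A, f x ∂σ := by
      refine setLIntegral_mono hfmeas fun x hx => ?_
      exact hx.2.1
    have h4 : ∫⁻ x in E ∩ A, f x ∂σ ≤ ∫⁻ x in E, f x ∂σ :=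
      lintegral_mono_set inter_subset_left
    have h5 : ∫⁻ x in E, f x ∂σ = κ E := by
      rw [← hwd, withDensity_apply f hE]
    rw [h1]
    calc δ * σ (E ∩ A) ≤ ∫⁻ x in E, f x ∂σ := by
          rw [h2]; exact h3.trans h4
      _ = κ E := h5

lemma four_mul_div_pow (x : ℝ≥0∞) (i : ℕ) : 4 * (x / 2 ^ (i + 4)) = x / 2 ^ (i + 2) := by
  have h : (2:ℝ≥0∞) ^ (i + 4) = 2 ^ (i + 2) * 4 := by
    rw [show i + 4 = (i + 2) + 2 by omega, pow_add]
    norm_num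
  have h2 : x / (2 ^ (i + 2) * 4) = x / 2 ^ (i + 2) / 4 := by
    rw [div_eq_mul_inv, div_eq_mul_inv, div_eq_mul_inv,
      ENNReal.mul_inv (Or.inl (by positivity)) (Or.inl (by norm_num)), mul_assoc]
  rw [h, h2]
  exact ENNReal.mul_div_cancel' (by norm_num) (by norm_num)

lemma lemmaB (W : Set (ℝ × ℝ)) (hW : MemADeltaSigma W)
    (hmeet : ∀ A B : Set ℝ, MeasurableSet A → MeasurableSet B →
      A ⊆ Ioo (0:ℝ) 1 → B ⊆ Ioo (0:ℝ) 1 →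
      0 < volume A → 0 < volume B → (W ∩ A ×ˢ B).Nonempty)
    (κ₁ κ₂ : Measure ℝ) (hκ₁ : κ₁ ≤ volume.restrict (Ioo (0:ℝ) 1))
    (hκ₂ : κ₂ ≤ volume.restrict (Ioo (0:ℝ) 1)) (h10 : κ₁ ≠ 0) (h20 : κ₂ ≠ 0) :
    ∃ m, Feas κ₁ κ₂ m ∧ 0 < m W := by
  haveI hfinI := isFiniteRestrictIoo
  obtain ⟨A, δ₁, hAmeas, hAIoo, hvolA, hδ₁0, hδ₁1, hδ₁le⟩ := exists_density_set hκ₁ h10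
  obtain ⟨B, δ₂, hBmeas, hBIoo, hvolB, hδ₂0, hδ₂1, hδ₂le⟩ := exists_density_set hκ₂ h20
  set σ : Measure ℝ := volume.restrict (Ioo (0:ℝ) 1) with hσ
  set κA : Measure ℝ := σ.restrict A with hκA
  set κB : Measure ℝ := σ.restrict B with hκB
  have hκAσ : κA ≤ σ := Measure.restrict_le_self
  have hκBσ : κB ≤ σ := Measure.restrict_le_self
  haveI : IsFiniteMeasure κA := isFiniteMeasure_of_le _ hκAσ
  haveI : IsFiniteMeasure κB := isFiniteMeasure_of_le _ hκBσ
  by_contra hcon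
  push_neg at hcon
  -- every (κA, κB)-feasible measure vanishes on W
  have H0 : ∀ m, Feas κA κB m → m W = 0 := by
    intro m hm
    set cc := min δ₁ δ₂ with hcc
    have hcc1 : cc ≤ 1 := (min_le_left _ _).trans hδ₁1
    have hsc : Feas κ₁ κ₂ (cc • m) := by
      constructor
      · rw [Measure.map_smul]
        intro s
        rw [Measure.smul_apply, smul_eq_mul]
        calc cc * (m.map Prod.fst) s ≤ cc * κA s := mul_le_mul_right (hm.1 s) _
          _ ≤ δ₁ * κA s := mul_le_mul_left (min_le_left _ _) _
          _ ≤ κ₁ s := by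
              have := hδ₁le s
              rwa [Measure.smul_apply, smul_eq_mul] at this
      · rw [Measure.map_smul]
        intro s
        rw [Measure.smul_apply, smul_eq_mul]
        calc cc * (m.map Prod.snd) s ≤ cc * κB s := mul_le_mul_right (hm.2 s) _
          _ ≤ δ₂ * κB s := mul_le_mul_left (min_le_right _ _) _
          _ ≤ κ₂ s := by
              have := hδ₂le s
              rwa [Measure.smul_apply, smul_eq_mul] at this
    have h0 := hcon (cc • m) hsc
    rw [Measure.smul_apply, smul_eq_mul] at h0
    have hcc0 : cc ≠ 0 := by
      rw [hcc]
      exact (lt_min hδ₁0 hδ₂0).ne'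
    rcases (mul_eq_zero.mp (le_antisymm h0 (zero_le))) with h | h
    · exact absurd h hcc0
    · exact h
  obtain ⟨G, hG, hWeq⟩ := hW
  set T : ℕ → ℕ → Set (ℝ × ℝ) := fun i J => ⋂ j, ⋂ (_ : j ≤ J), G i j with hT
  have hTfin : ∀ i J, IsFinUnionRect (T i J) := by
    intro i J
    induction J with
    | zero => rw [show T i 0 = G i 0 from biInter_le_zero' _]; exact hG i 0
    | succ J ih =>
        rw [show T i (J + 1) = T i J ∩ G i (J + 1) from biInter_le_succ' _ _]
        exact IsFinUnionRect.inter ih (hG i (J + 1))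
  have hTanti : ∀ i, Antitone (T i) := by
    intro i a b hab x hx
    simp only [hT, Set.mem_iInter] at hx ⊢
    exact fun j hj => hx j (hj.trans hab)
  have hTiInter : ∀ i, (⋂ J, T i J) = ⋂ j, G i j := by
    intro i
    ext x
    simp only [hT, Set.mem_iInter]
    exact ⟨fun h j => h j j le_rfl, fun h J j _ => h j⟩
  have hGW : ∀ i, (⋂ j, G i j) ⊆ W := by
    intro i
    rw [hWeq]
    exact Set.subset_iUnion (fun i => ⋂ j, G i j) i
  have hflow : ∀ (i : ℕ) (η : ℝ≥0∞), η ≠ 0 → η ≠ ∞ →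
      ∃ J, ∀ m, Feas κA κB m → m (T i J) < η := by
    intro i η hη hη'
    by_contra hcontra
    push_neg at hcontra
    obtain ⟨m, hmfeas, hmlow⟩ := lemmaA κA κB hκAσ hκBσ (T i) (hTfin i) (hTanti i) η hcontra
      (ε := η / 2) (by simp [ENNReal.div_eq_zero_iff, hη])
    have hWm : m W = 0 := H0 m hmfeas
    have hpos : 0 < m W := by
      have h1 : η - η / 2 = η / 2 := ENNReal.sub_half hη'
      have h2 : (0:ℝ≥0∞) < η / 2 := by
        rw [ENNReal.div_pos_iff]
        exact ⟨hη, by norm_num⟩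
      calc (0:ℝ≥0∞) < η / 2 := h2
        _ = η - η / 2 := h1.symm
        _ ≤ m (⋂ J, T i J) := hmlow
        _ = m (⋂ j, G i j) := by rw [hTiInter]
        _ ≤ m W := measure_mono (hGW i)
    rw [hWm] at hpos
    exact lt_irrefl 0 hpos
  have hMA : σ A = volume A := by
    rw [hσ, Measure.restrict_apply hAmeas, inter_eq_self_of_subset_left hAIoo]
  have hMB : σ B = volume B := by
    rw [hσ, Measure.restrict_apply hBmeas, inter_eq_self_of_subset_left hBIoo]
  set M : ℝ≥0∞ := min (σ A) (σ B) with hM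
  have hM0 : M ≠ 0 := by
    rw [hM]
    refine (lt_min ?_ ?_).ne'
    · rw [hMA]; exact hvolA
    · rw [hMB]; exact hvolB
  have hMtop : M ≠ ∞ := by
    rw [hM]
    refine ((min_le_left _ _).trans_lt ?_).ne
    exact (measure_mono (subset_univ A)).trans_lt
      (by rw [Measure.restrict_apply_univ]; simp)
  set η : ℕ → ℝ≥0∞ := fun i => M / 2 ^ (i + 4) with hη
  have hη0 : ∀ i, η i ≠ 0 := by
    intro i
    rw [hη, ne_eq, ENNReal.div_eq_zero_iff]
    rintro (h | h)
    · exact hM0 h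
    · exact ENNReal.pow_ne_top (by norm_num) h
  have hηtop : ∀ i, η i ≠ ∞ := by
    intro i
    rw [hη]
    exact (ENNReal.div_lt_top hMtop (by positivity)).ne
  choose Js hJs using fun i => hflow i (η i) (hη0 i) (hηtop i)
  have hcover : ∀ i, ∃ A' B' : Set ℝ, MeasurableSet A' ∧ MeasurableSet B' ∧
      (A' ×ˢ B') ∩ T i (Js i) = ∅ ∧ κA A'ᶜ + κB B'ᶜ < 4 * η i := by
    intro i
    obtain ⟨n, R, hR, hTeq⟩ := hTfin i (Js i)
    choose Uu Vv hUm hVm hU1 hV1 hRk using hR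
    have hTeq2 : T i (Js i) = ⋃ k, Uu k ×ˢ Vv k := by
      rw [hTeq]; exact Set.iUnion_congr hRk
    by_contra hcc
    push_neg at hcc
    obtain ⟨m, hmf, hmm⟩ := dual n Uu Vv hUm hVm κA κB inferInstance inferInstance
      (4 * η i) (fun A' B' hA' hB' he => hcc A' B' hA' hB' (by rw [hTeq2]; exact he))
    rw [← hTeq2] at hmm
    have h4 : 4 * η i / 2 = 2 * η i := by
      rw [show (4:ℝ≥0∞) * η i = 2 * (2 * η i) by ring, two_mul_div_two]
    rw [h4] at hmm
    have hlt := hJs i m hmf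
    have : (2:ℝ≥0∞) * η i < 2 * η i :=
      lt_of_le_of_lt hmm (hlt.trans_le (by
        rw [two_mul]
        exact le_add_self))
    exact lt_irrefl _ this
  choose Ac Bc hAc hBc hEmpty hSmall using hcover
  set Astar := A ∩ ⋂ i, Ac i with hAstar
  set Bstar := B ∩ ⋂ i, Bc i with hBstar
  have hAstarMeas : MeasurableSet Astar := hAmeas.inter (MeasurableSet.iInter hAc)
  have hBstarMeas : MeasurableSet Bstar := hBmeas.inter (MeasurableSet.iInter hBc)
  have hdiff : ∀ (X : Set ℝ) (Xc : ℕ → Set ℝ) (κX : Measure ℝ), MeasurableSet X →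
      (∀ i, MeasurableSet (Xc i)) → (κX = σ.restrict X) →
      (∀ i, κX (Xc i)ᶜ ≤ 4 * η i) → σ (X \ (X ∩ ⋂ i, Xc i)) ≤ M / 2 := by
    intro X Xc κX hX hXc hκX hbound
    have hsub : X \ (X ∩ ⋂ i, Xc i) ⊆ ⋃ i, (X ∩ (Xc i)ᶜ) := by
      intro x hx
      obtain ⟨hx1, hx2⟩ := hx
      rw [Set.mem_inter_iff, not_and_or] at hx2
      rcases hx2 with h | h
      · exact absurd hx1 h
      · rw [Set.mem_iInter, not_forall] at h
        obtain ⟨i, hi⟩ := h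
        exact Set.mem_iUnion.mpr ⟨i, hx1, hi⟩
    calc σ (X \ (X ∩ ⋂ i, Xc i)) ≤ σ (⋃ i, (X ∩ (Xc i)ᶜ)) := measure_mono hsub
      _ ≤ ∑' i, σ (X ∩ (Xc i)ᶜ) := measure_iUnion_le _
      _ ≤ ∑' i, 4 * η i := by
          refine ENNReal.tsum_le_tsum fun i => ?_
          have : σ (X ∩ (Xc i)ᶜ) = κX (Xc i)ᶜ := by
            rw [hκX, Measure.restrict_apply (hXc i).compl, Set.inter_comm]
          rw [this]
          exact hbound i
      _ = ∑' i, M / 2 ^ (i + 2) := by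
          refine tsum_congr fun i => ?_
          rw [hη, four_mul_div_pow]
      _ = M / 2 := tsum_eps_half M
  have hposStar : ∀ (X : Set ℝ) (S : Set ℝ), MeasurableSet X → X ⊆ Ioo (0:ℝ) 1 →
      0 < volume X → σ (X \ S) ≤ M / 2 → M ≤ σ X → 0 < σ (X ∩ S) := by
    intro X S hX hXIoo hvolX hXS hMX
    by_contra hz
    push_neg at hz
    have hz0 : σ (X ∩ S) = 0 := le_antisymm hz (zero_le)
    have hXsplit : σ X ≤ σ (X ∩ S) + σ (X \ S) := by
      refine (measure_mono ?_).trans (measure_union_le _ _)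
      intro x hx
      by_cases h : x ∈ S
      · exact Or.inl ⟨hx, h⟩
      · exact Or.inr ⟨hx, h⟩
    rw [hz0, zero_add] at hXsplit
    have hσX0 : σ X ≠ 0 := by
      rw [hσ, Measure.restrict_apply hX, inter_eq_self_of_subset_left hXIoo]
      exact hvolX.ne'
    have hσXtop : σ X ≠ ∞ := by
      refine ((measure_mono (subset_univ X)).trans_lt ?_).ne
      rw [Measure.restrict_apply_univ]
      simp
    have : σ X < σ X :=
      calc σ X ≤ M / 2 := hXsplit.trans hXS
        _ ≤ σ X / 2 := ENNReal.div_le_div_right hMX 2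
        _ < σ X := ENNReal.half_lt_self hσX0 hσXtop
    exact lt_irrefl _ this
  have hAσpos : 0 < σ Astar := by
    have h1 := hdiff A Ac κA hAmeas hAc rfl (fun i => ((le_add_right le_rfl).trans
      (hSmall i).le : κA (Ac i)ᶜ ≤ 4 * η i))
    rw [Set.diff_self_inter] at h1
    exact hposStar A (⋂ i, Ac i) hAmeas hAIoo hvolA h1 (min_le_left _ _)
  have hBσpos : 0 < σ Bstar := by
    have h1 := hdiff B Bc κB hBmeas hBc rfl (fun i => ((le_add_left le_rfl).trans
      (hSmall i).le : κB (Bc i)ᶜ ≤ 4 * η i))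
    rw [Set.diff_self_inter] at h1
    exact hposStar B (⋂ i, Bc i) hBmeas hBIoo hvolB h1 (min_le_right _ _)
  have hAvolpos : 0 < volume Astar :=
    hAσpos.trans_le (le_restrict_vol_apply le_rfl Astar)
  have hBvolpos : 0 < volume Bstar :=
    hBσpos.trans_le (le_restrict_vol_apply le_rfl Bstar)
  have hWdisj : W ∩ (Astar ×ˢ Bstar) = ∅ := by
    rw [hWeq]
    rw [Set.iUnion_inter]
    refine Set.iUnion_eq_empty.mpr fun i => ?_
    refine eq_empty_of_subset_empty ?_
    intro x hx
    obtain ⟨hx1, hx2⟩ := hx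
    have hxT : x ∈ T i (Js i) := by
      rw [← hTiInter i] at hx1
      exact Set.mem_iInter.mp hx1 (Js i)
    have hxAB : x ∈ (Ac i) ×ˢ (Bc i) := by
      obtain ⟨hxa, hxb⟩ := hx2
      exact ⟨Set.mem_iInter.mp hxa.2 i, Set.mem_iInter.mp hxb.2 i⟩
    have : x ∈ ((Ac i) ×ˢ (Bc i)) ∩ T i (Js i) := ⟨hxAB, hxT⟩
    rw [hEmpty i] at this
    exact this
  have hne := hmeet Astar Bstar hAstarMeas hBstarMeas
    (inter_subset_left.trans hAIoo) (inter_subset_left.trans hBIoo) hAvolpos hBvolpos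
  rw [hWdisj] at hne
  exact Set.not_nonempty_empty hne

lemma measure_eq_of_le_of_univ_eq {α : Type*} [MeasurableSpace α] {μ ν : Measure α}
    [IsFiniteMeasure ν] (h : μ ≤ ν) (huniv : μ univ = ν univ) : μ = ν := by
  ext E hE
  refine le_antisymm (h E) ?_
  have hd : ν Eᶜ ≠ ∞ := measure_ne_top ν Eᶜ
  calc ν E = ν E + ν Eᶜ - ν Eᶜ := (ENNReal.add_sub_cancel_right hd).symm
    _ = μ E + μ Eᶜ - ν Eᶜ := by
        rw [measure_add_measure_compl hE, measure_add_measure_compl hE, huniv]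
    _ ≤ μ E + ν Eᶜ - ν Eᶜ := by
        gcongr
    _ = μ E := ENNReal.add_sub_cancel_right hd

lemma measure_sub_le_sub {α : Type*} [MeasurableSpace α] {σ a c : Measure α}
    [IsFiniteMeasure a] [IsFiniteMeasure c] (ha : a ≤ σ) (hca : c ≤ a) :
    σ - a ≤ σ - c := by
  rw [Measure.le_iff]
  intro E hE
  rw [Measure.sub_apply hE ha, Measure.sub_apply hE (hca.trans ha)]
  exact tsub_le_tsub_left (hca E) (σ E)

theorem mainthm (W : Set (ℝ × ℝ)) (hW : MemADeltaSigma W)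
    (hmeet : ∀ A B : Set ℝ, MeasurableSet A → MeasurableSet B →
      A ⊆ Ioo (0:ℝ) 1 → B ⊆ Ioo (0:ℝ) 1 →
      0 < volume A → 0 < volume B → (W ∩ A ×ˢ B).Nonempty) :
    ∃ m : Measure (ℝ × ℝ), IsProbabilityMeasure m ∧ m W = 1 ∧
      m.map Prod.fst = volume.restrict (Ioo (0:ℝ) 1) ∧
      m.map Prod.snd = volume.restrict (Ioo (0:ℝ) 1) := by
  haveI hfinI := isFiniteRestrictIoo
  set σ : Measure ℝ := volume.restrict (Ioo (0:ℝ) 1) with hσ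
  have hσuniv : σ univ = 1 := by
    rw [hσ, Measure.restrict_apply_univ]
    simp
  have hWmeas : MeasurableSet W := by
    obtain ⟨G, hG, rfl⟩ := hW
    exact MeasurableSet.iUnion fun i => MeasurableSet.iInter fun j =>
      IsFinUnionRect.measurableSet (hG i j)
  -- the "remaining value" function
  set R : Measure (ℝ × ℝ) → ℝ≥0∞ := fun ν =>
    ⨆ p : {m : Measure (ℝ × ℝ) // Feas (σ - ν.map Prod.fst) (σ - ν.map Prod.snd) m},
      (p : {m : Measure (ℝ × ℝ) // _}).val W with hR
  have hRle : ∀ ν, R ν ≤ 1 := by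
    intro ν
    refine iSup_le fun p => ?_
    calc p.val W ≤ p.val univ := measure_mono (subset_univ W)
      _ ≤ (σ - ν.map Prod.fst) univ := p.prop.mass
      _ ≤ σ univ := Measure.sub_le univ
      _ = 1 := hσuniv
  have hpick : ∀ ν : Measure (ℝ × ℝ), ∃ m : Measure (ℝ × ℝ),
      Feas (σ - ν.map Prod.fst) (σ - ν.map Prod.snd) m ∧ m Wᶜ = 0 ∧ R ν / 2 ≤ m W := by
    intro ν
    rcases eq_or_ne (R ν) 0 with h0 | hne
    · exact ⟨0, Feas.zero _ _, by simp, by simp [h0]⟩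
    · have hhalf : R ν / 2 < R ν :=
        ENNReal.half_lt_self hne (((hRle ν).trans_lt (by norm_num)).ne)
      rw [hR] at hhalf
      obtain ⟨⟨m, hm⟩, hlt⟩ := lt_iSup_iff.mp hhalf
      refine ⟨m.restrict W, hm.restrict W, ?_, ?_⟩
      · rw [Measure.restrict_apply hWmeas.compl, Set.compl_inter_self, measure_empty]
      · rw [Measure.restrict_apply hWmeas, Set.inter_self]
        exact hlt.le
  choose pick hpickF hpickN hpickW using hpick
  -- partial sums
  set μs : ℕ → Measure (ℝ × ℝ) := fun n => Nat.rec 0 (fun _ acc => acc + pick acc) n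
    with hμs
  have hμ0 : μs 0 = 0 := rfl
  have hμsucc : ∀ n, μs (n + 1) = μs n + pick (μs n) := fun n => rfl
  have hInv : ∀ n, (μs n).map Prod.fst ≤ σ ∧ (μs n).map Prod.snd ≤ σ := by
    intro n
    induction n with
    | zero =>
        constructor <;> · rw [hμ0, Measure.map_zero]; intro s; exact zero_le
    | succ n ih =>
        haveI : IsFiniteMeasure ((μs n).map Prod.fst) := isFiniteMeasure_of_le _ ih.1
        haveI : IsFiniteMeasure ((μs n).map Prod.snd) := isFiniteMeasure_of_le _ ih.2
        constructor
        · rw [hμsucc n, Measure.map_add _ _ measurable_fst]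
          calc (μs n).map Prod.fst + (pick (μs n)).map Prod.fst
              ≤ (μs n).map Prod.fst + (σ - (μs n).map Prod.fst) :=
                add_le_add le_rfl (hpickF (μs n)).1
            _ = σ := by
                rw [add_comm]
                exact Measure.sub_add_cancel_of_le ih.1
        · rw [hμsucc n, Measure.map_add _ _ measurable_snd]
          calc (μs n).map Prod.snd + (pick (μs n)).map Prod.snd
              ≤ (μs n).map Prod.snd + (σ - (μs n).map Prod.snd) :=
                add_le_add le_rfl (hpickF (μs n)).2
            _ = σ := by
                rw [add_comm]
                exact Measure.sub_add_cancel_of_le ih.2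
  have hsum_eq : ∀ n (E : Set (ℝ × ℝ)), μs n E = ∑ k ∈ Finset.range n, pick (μs k) E := by
    intro n E
    induction n with
    | zero => simp [hμ0]
    | succ n ih =>
        rw [hμsucc n, Measure.add_apply, ih, Finset.sum_range_succ]
  set mfin : Measure (ℝ × ℝ) := Measure.sum (fun k => pick (μs k)) with hmfin
  have hmfin_apply : ∀ E : Set (ℝ × ℝ), MeasurableSet E →
      mfin E = ∑' k, pick (μs k) E := by
    intro E hE
    rw [hmfin, Measure.sum_apply _ hE]
  have hmap_le : mfin.map Prod.fst ≤ σ ∧ mfin.map Prod.snd ≤ σ := by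
    constructor
    · rw [Measure.le_iff]
      intro E hE
      rw [Measure.map_apply measurable_fst hE, hmfin_apply _ (measurable_fst hE),
        ENNReal.tsum_eq_iSup_nat]
      refine iSup_le fun n => ?_
      rw [← hsum_eq n]
      calc (μs n) (Prod.fst ⁻¹' E) = ((μs n).map Prod.fst) E :=
            (Measure.map_apply measurable_fst hE).symm
        _ ≤ σ E := (hInv n).1 E
    · rw [Measure.le_iff]
      intro E hE
      rw [Measure.map_apply measurable_snd hE, hmfin_apply _ (measurable_snd hE),
        ENNReal.tsum_eq_iSup_nat]
      refine iSup_le fun n => ?_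
      rw [← hsum_eq n]
      calc (μs n) (Prod.snd ⁻¹' E) = ((μs n).map Prod.snd) E :=
            (Measure.map_apply measurable_snd hE).symm
        _ ≤ σ E := (hInv n).2 E
  haveI : IsFiniteMeasure (mfin.map Prod.fst) := isFiniteMeasure_of_le _ hmap_le.1
  haveI : IsFiniteMeasure (mfin.map Prod.snd) := isFiniteMeasure_of_le _ hmap_le.2
  have hmfin_univ_le : mfin univ ≤ 1 := by
    have h1 : mfin univ = (mfin.map Prod.fst) univ := by
      rw [Measure.map_apply measurable_fst MeasurableSet.univ, Set.preimage_univ]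
    rw [h1]
    exact (hmap_le.1 univ).trans (le_of_eq hσuniv)
  have hmfinN : mfin Wᶜ = 0 := by
    rw [hmfin_apply _ hWmeas.compl]
    simp [hpickN]
  have hmfin_univ : mfin univ = mfin W := by
    rw [← measure_add_measure_compl hWmeas, hmfinN, add_zero]
  -- main claim : mfin W = 1
  have hmfinW : mfin W = 1 := by
    by_contra hne1
    have hlt1 : mfin W < 1 := lt_of_le_of_ne (hmfin_univ ▸ hmfin_univ_le) hne1
    -- the residuals are nonzero
    have hres1 : (σ - mfin.map Prod.fst) ≠ 0 := by
      rw [← Measure.measure_univ_ne_zero, Measure.sub_apply MeasurableSet.univ hmap_le.1]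
      have : (mfin.map Prod.fst) univ < σ univ := by
        rw [hσuniv, Measure.map_apply measurable_fst MeasurableSet.univ, Set.preimage_univ,
          hmfin_univ]
        exact hlt1
      exact (tsub_pos_of_lt this).ne'
    have hres2 : (σ - mfin.map Prod.snd) ≠ 0 := by
      rw [← Measure.measure_univ_ne_zero, Measure.sub_apply MeasurableSet.univ hmap_le.2]
      have : (mfin.map Prod.snd) univ < σ univ := by
        rw [hσuniv, Measure.map_apply measurable_snd MeasurableSet.univ, Set.preimage_univ,
          hmfin_univ]
        exact hlt1
      exact (tsub_pos_of_lt this).ne'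
    obtain ⟨mβ, hβfeas, hβpos⟩ := lemmaB W hW hmeet _ _
      (Measure.sub_le) (Measure.sub_le) hres1 hres2
    -- mβ is feasible for every residual along the way
    have hμle : ∀ n, (μs n).map Prod.fst ≤ mfin.map Prod.fst ∧
        (μs n).map Prod.snd ≤ mfin.map Prod.snd := by
      intro n
      constructor
      · rw [Measure.le_iff]
        intro E hE
        rw [Measure.map_apply measurable_fst hE, Measure.map_apply measurable_fst hE,
          hmfin_apply _ (measurable_fst hE), hsum_eq n]
        exact ENNReal.sum_le_tsum _
      · rw [Measure.le_iff]
        intro E hE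
        rw [Measure.map_apply measurable_snd hE, Measure.map_apply measurable_snd hE,
          hmfin_apply _ (measurable_snd hE), hsum_eq n]
        exact ENNReal.sum_le_tsum _
    have hβn : ∀ n, mβ W ≤ R (μs n) := by
      intro n
      haveI : IsFiniteMeasure ((μs n).map Prod.fst) := isFiniteMeasure_of_le _ (hInv n).1
      haveI : IsFiniteMeasure ((μs n).map Prod.snd) := isFiniteMeasure_of_le _ (hInv n).2
      have hfeasn : Feas (σ - (μs n).map Prod.fst) (σ - (μs n).map Prod.snd) mβ :=
        hβfeas.mono (measure_sub_le_sub hmap_le.1 (hμle n).1)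
          (measure_sub_le_sub hmap_le.2 (hμle n).2)
      exact le_iSup (fun p : {m : Measure (ℝ × ℝ) //
        Feas (σ - (μs n).map Prod.fst) (σ - (μs n).map Prod.snd) m} => p.val W)
        ⟨mβ, hfeasn⟩
    have htop : mfin W = ∞ := by
      rw [hmfin_apply _ hWmeas]
      refine top_le_iff.mp ?_
      calc (⊤:ℝ≥0∞) = ∑' _ : ℕ, mβ W / 2 :=
            (ENNReal.tsum_const_eq_top_of_ne_zero (by
              simp only [ne_eq, ENNReal.div_eq_zero_iff, not_or]
              exact ⟨hβpos.ne', by norm_num⟩)).symm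
        _ ≤ ∑' k, pick (μs k) W := by
            refine ENNReal.tsum_le_tsum fun k => ?_
            exact (ENNReal.div_le_div_right (hβn k) 2).trans (hpickW (μs k))
      
    rw [htop] at hlt1
    exact absurd hlt1 (by simp)
  have hprob : IsProbabilityMeasure mfin := ⟨by rw [hmfin_univ, hmfinW]⟩
  have hmg1 : mfin.map Prod.fst = σ := by
    refine measure_eq_of_le_of_univ_eq hmap_le.1 ?_
    rw [Measure.map_apply measurable_fst MeasurableSet.univ, Set.preimage_univ, hmfin_univ,
      hmfinW, hσuniv]
  have hmg2 : mfin.map Prod.snd = σ := by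
    refine measure_eq_of_le_of_univ_eq hmap_le.2 ?_
    rw [Measure.map_apply measurable_snd MeasurableSet.univ, Set.preimage_univ, hmfin_univ,
      hmfinW, hσuniv]
  exact ⟨mfin, hprob, hmfinW, hmg1, hmg2⟩

end S4

theorem stmt4 (W : Set (ℝ × ℝ)) (hW : MemADeltaSigma W)
    (hmeet : ∀ A B : Set ℝ, MeasurableSet A → MeasurableSet B →
      A ⊆ Ioo (0:ℝ) 1 → B ⊆ Ioo (0:ℝ) 1 →
      0 < volume A → 0 < volume B → (W ∩ A ×ˢ B).Nonempty) :
    ∃ m : Measure (ℝ × ℝ), IsProbabilityMeasure m ∧ m W = 1 ∧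
      m.map Prod.fst = volume.restrict (Ioo (0:ℝ) 1) ∧
      m.map Prod.snd = volume.restrict (Ioo (0:ℝ) 1) := by
  exact S4.mainthm W hW hmeet
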